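/- Let p be a prime and 0 ≤ m ≤ n. The number of m-tuples (v_1,…,v_m) of vectors of (ZMod p)^{2n} that are linearly independent over ZMod p and pairwise symplectically orthogonal (⟨v_i,v_j⟩ = 0 for all i,j) equals Π_{i=0}^{m−1} (p^{2n−i} − p^i). -/

import Mathlib

open scoped BigOperators

/-- The phase space `(ZMod p)^n × (ZMod p)^n`, representing `(ZMod p)^{2n}`
written as pairs `(a|b)`. -/
abbrev PV (p n : ℕ) := (Fin n → ZMod p) × (Fin n → ZMod p)

/-- The symplectic inner product `⟨x,y⟩ = ∑ i, (b i * c i - a i * d i)`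
for `x = (a|b)`, `y = (c|d)`. -/
def symp {p n : ℕ} (x y : PV p n) : ZMod p :=
  ∑ i, (x.2 i * y.1 i - x.1 i * y.2 i)

/-- `ξ_1,…,ξ_n, η_1,…,η_n` form a hyperbolic basis of `(ZMod p)^{2n}`. -/
def IsHyperbolicBasis {p n : ℕ} (ξ η : Fin n → PV p n) : Prop :=
  LinearIndependent (ZMod p) (Sum.elim ξ η) ∧
  Submodule.span (ZMod p) (Set.range (Sum.elim ξ η)) = ⊤ ∧
  (∀ i j, symp (ξ i) (η j) = if i = j then 1 else 0) ∧
  (∀ i j, symp (ξ i) (ξ j) = 0) ∧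
  (∀ i j, symp (η i) (η j) = 0)

/-- Symplectic orthogonal complement `W^⊥` of a submodule `W`. -/
def sympOrtho {p n : ℕ} (W : Submodule (ZMod p) (PV p n)) :
    Submodule (ZMod p) (PV p n) where
  carrier := {y | ∀ x ∈ W, symp x y = 0}
  zero_mem' := by intro x hx; simp [symp]
  add_mem' := by
    intro a b ha hb x hx
    have h : symp x (a + b) = symp x a + symp x b := by
      unfold symp
      rw [← Finset.sum_add_distrib]
      refine Finset.sum_congr rfl ?_
      intro i _
      simp only [Prod.fst_add, Prod.snd_add, Pi.add_apply]
      ring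
    rw [h, ha x hx, hb x hx, add_zero]
  smul_mem' := by
    intro c a ha x hx
    have h : symp x (c • a) = c * symp x a := by
      unfold symp
      rw [Finset.mul_sum]
      refine Finset.sum_congr rfl ?_
      intro i _
      simp only [Prod.smul_fst, Prod.smul_snd, Pi.smul_apply, smul_eq_mul]
      ring
    rw [h, ha x hx, mul_zero]

/-- `ω = exp(2πi/p)`. -/
noncomputable def omg (p : ℕ) : ℂ := Complex.exp (2 * Real.pi * Complex.I / p)

/-- The matrix `XZⁿ(v)` for `v = (a|b)`: entry `(r,c)` equals `ω^{b·c}`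
if `r = c + a`, and `0` otherwise. -/
noncomputable def XZ {p n : ℕ} (v : PV p n) :
    Matrix (Fin n → ZMod p) (Fin n → ZMod p) ℂ :=
  fun r c => if r = c + v.1 then omg p ^ (∑ i, v.2 i * c i).val else 0

/-- The standard basis vector `δ_u`. -/
def delta {p n : ℕ} (u : Fin n → ZMod p) : (Fin n → ZMod p) → ℂ :=
  fun v => if v = u then 1 else 0

/-- Ordered product `∏_{i=1}^n (M i)^{u_i}` of matrices, powers via integer lifts. -/
noncomputable def prodPow {p n : ℕ} [NeZero p]
    (M : Fin n → Matrix (Fin n → ZMod p) (Fin n → ZMod p) ℂ)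
    (u : Fin n → ZMod p) : Matrix (Fin n → ZMod p) (Fin n → ZMod p) ℂ :=
  ((List.finRange n).map (fun i => (M i) ^ (u i).val)).prod

/-- Splice `e ∈ (ZMod p)^{n-k}` and `x ∈ (ZMod p)^k` into a vector of `(ZMod p)^n`,
identifying `(ZMod p)^n` with `(ZMod p)^{n-k} × (ZMod p)^k`. -/
def splice {p n k : ℕ} (hk : k ≤ n) (e : Fin (n - k) → ZMod p)
    (x : Fin k → ZMod p) : Fin n → ZMod p :=
  fun i => Fin.append e x (Fin.cast (by omega) i)

/-- The index `n - k + i` of `Fin n`, for `i : Fin k`. -/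
def lastIdx {n k : ℕ} (hk : k ≤ n) (i : Fin k) : Fin n :=
  ⟨n - k + i.1, by have := i.2; omega⟩

/-- Kronecker (tensor) product of two vectors. -/
def vecKron {ι : Type*} (f g : ι → ℂ) : ι × ι → ℂ := fun q => f q.1 * g q.2

/-- Entrywise complex conjugate of a vector. -/
def conjVec {ι : Type*} (f : ι → ℂ) : ι → ℂ := fun i => (starRingEnd ℂ) (f i)

set_option maxHeartbeats 1000000

section Aux

variable {p n : ℕ}

lemma symp_add_left (x y z : PV p n) : symp (x + y) z = symp x z + symp y z := by
  simp only [symp, Prod.fst_add, Prod.snd_add, Pi.add_apply]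
  rw [← Finset.sum_add_distrib]
  exact Finset.sum_congr rfl fun i _ => by ring

lemma symp_smul_left (c : ZMod p) (x y : PV p n) : symp (c • x) y = c * symp x y := by
  simp only [symp, Prod.smul_fst, Prod.smul_snd, Pi.smul_apply, smul_eq_mul]
  rw [Finset.mul_sum]
  exact Finset.sum_congr rfl fun i _ => by ring

lemma symp_add_right (x y z : PV p n) : symp x (y + z) = symp x y + symp x z := by
  simp only [symp, Prod.fst_add, Prod.snd_add, Pi.add_apply]
  rw [← Finset.sum_add_distrib]
  exact Finset.sum_congr rfl fun i _ => by ring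

lemma symp_smul_right (c : ZMod p) (x y : PV p n) : symp x (c • y) = c * symp x y := by
  simp only [symp, Prod.smul_fst, Prod.smul_snd, Pi.smul_apply, smul_eq_mul]
  rw [Finset.mul_sum]
  exact Finset.sum_congr rfl fun i _ => by ring

noncomputable def sympB (p n : ℕ) : LinearMap.BilinForm (ZMod p) (PV p n) :=
  LinearMap.mk₂ (ZMod p) symp symp_add_left symp_smul_left symp_add_right symp_smul_right

@[simp] lemma sympB_apply (x y : PV p n) : sympB p n x y = symp x y := rfl

lemma symp_skew (x y : PV p n) : symp x y = - symp y x := by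
  simp only [symp, ← Finset.sum_neg_distrib]
  exact Finset.sum_congr rfl fun i _ => by ring

lemma sympB_refl : (sympB p n).IsRefl := by
  intro x y h
  simp only [sympB_apply] at h ⊢
  rw [symp_skew, h, neg_zero]

lemma sympB_nondeg [Fact p.Prime] : (sympB p n).Nondegenerate := by
  refine LinearMap.BilinForm.Nondegenerate.ofSeparatingLeft ?_
  intro x hx
  have h1 : ∀ j, x.1 j = 0 := by
    intro j
    have := hx (0, Pi.single j 1)
    simp only [sympB_apply, symp] at this
    simpa [Pi.single_apply, mul_ite, Finset.sum_ite_eq'] using this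
  have h2 : ∀ j, x.2 j = 0 := by
    intro j
    have := hx (Pi.single j 1, 0)
    simp only [sympB_apply, symp] at this
    simpa [Pi.single_apply, mul_ite, Finset.sum_ite_eq'] using this
  exact Prod.ext (funext h1) (funext h2)

lemma finrank_PV [Fact p.Prime] : Module.finrank (ZMod p) (PV p n) = 2 * n := by
  rw [Module.finrank_prod, Module.finrank_pi]
  simp [two_mul]

lemma mem_ortho_span_iff {m : ℕ} (v : Fin m → PV p n) (x : PV p n) :
    x ∈ (sympB p n).orthogonal (Submodule.span (ZMod p) (Set.range v)) ↔
      ∀ i, symp (v i) x = 0 := by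
  constructor
  · intro h i
    exact h (v i) (Submodule.subset_span (Set.mem_range_self i))
  · intro h w hw
    have hle : Submodule.span (ZMod p) (Set.range v) ≤
        LinearMap.ker ((sympB p n).flip x) := by
      rw [Submodule.span_le]
      rintro _ ⟨i, rfl⟩
      exact h i
    exact hle hw

end Aux

section Main

variable {p n : ℕ} [Fact p.Prime]

lemma symp_self (x : PV p n) : symp x x = 0 := by
  simp only [symp]
  rw [Finset.sum_eq_zero]
  intro i _
  ring

lemma span_le_ortho {m : ℕ} (v : Fin m → PV p n)
    (h : ∀ i j, symp (v i) (v j) = 0) :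
    Submodule.span (ZMod p) (Set.range v) ≤
      (sympB p n).orthogonal (Submodule.span (ZMod p) (Set.range v)) := by
  rw [Submodule.span_le]
  rintro _ ⟨i, rfl⟩
  rw [SetLike.mem_coe, mem_ortho_span_iff]
  exact fun j => h j i

lemma card_submodule (W : Submodule (ZMod p) (PV p n)) :
    Nat.card W = p ^ Module.finrank (ZMod p) W := by
  haveI : Fintype W := Fintype.ofFinite _
  rw [Nat.card_eq_fintype_card, Module.card_eq_pow_finrank (K := ZMod p), ZMod.card]

lemma card_fiber {m : ℕ} (v : Fin m → PV p n)
    (hv : LinearIndependent (ZMod p) v) (ho : ∀ i j, symp (v i) (v j) = 0) :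
    Nat.card {x : PV p n //
      x ∈ (sympB p n).orthogonal (Submodule.span (ZMod p) (Set.range v)) ∧
      x ∉ Submodule.span (ZMod p) (Set.range v)} = p ^ (2 * n - m) - p ^ m := by
  classical
  set W := Submodule.span (ZMod p) (Set.range v) with hW
  set O := (sympB p n).orthogonal W with hO
  have hWO : (W : Set (PV p n)) ⊆ (O : Set (PV p n)) := span_le_ortho v ho
  have hfW : Module.finrank (ZMod p) W = m := by
    rw [hW, finrank_span_eq_card hv, Fintype.card_fin]
  have hfO : Module.finrank (ZMod p) O = 2 * n - m := by
    rw [hO, LinearMap.BilinForm.finrank_orthogonal sympB_nondeg, finrank_PV, hfW]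
  have e : {x : PV p n // x ∈ O ∧ x ∉ W} ≃ ((O : Set (PV p n)) \ (W : Set (PV p n)) : Set (PV p n)) :=
    Equiv.subtypeEquivRight (by intro x; simp [Set.mem_diff])
  rw [Nat.card_congr e, Nat.card_coe_set_eq, Set.ncard_diff hWO,
    ← Nat.card_coe_set_eq, ← Nat.card_coe_set_eq]
  have cO : Nat.card (O : Set (PV p n)) = p ^ (2 * n - m) := by
    rw [show Nat.card (O : Set (PV p n)) = Nat.card O from rfl, card_submodule, hfO]
  have cW : Nat.card (W : Set (PV p n)) = p ^ m := by
    rw [show Nat.card (W : Set (PV p n)) = Nat.card W from rfl, card_submodule, hfW]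
  rw [cO, cW]

lemma ortho_snoc_iff {m : ℕ} (v : Fin m → PV p n) (x : PV p n) :
    (∀ i j, symp ((Fin.snoc v x : Fin (m+1) → PV p n) i) ((Fin.snoc v x : Fin (m+1) → PV p n) j) = 0) ↔
      (∀ i j, symp (v i) (v j) = 0) ∧
        x ∈ (sympB p n).orthogonal (Submodule.span (ZMod p) (Set.range v)) := by
  constructor
  · intro h
    refine ⟨fun i j => by simpa using h i.castSucc j.castSucc, ?_⟩
    rw [mem_ortho_span_iff]
    intro i
    simpa using h i.castSucc (Fin.last m)
  · rintro ⟨h1, h2⟩ i j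
    rw [mem_ortho_span_iff] at h2
    refine Fin.lastCases ?_ (fun i' => ?_) i
    · refine Fin.lastCases ?_ (fun j' => ?_) j
      · rw [Fin.snoc_last]; exact symp_self x
      · rw [Fin.snoc_last, Fin.snoc_castSucc, symp_skew, h2 j', neg_zero]
    · refine Fin.lastCases ?_ (fun j' => ?_) j
      · rw [Fin.snoc_last, Fin.snoc_castSucc]; exact h2 i'
      · rw [Fin.snoc_castSucc, Fin.snoc_castSucc]; exact h1 i' j'

end Main

/-- the number of `m`-tuples of linearly independent, pairwise
symplectically orthogonal vectors of `(ZMod p)^{2n}` is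
`∏_{i=0}^{m-1} (p^{2n-i} - p^i)`. -/
theorem stmt16 (p n m : ℕ) [Fact p.Prime] (hm : m ≤ n) :
    Nat.card {v : Fin m → PV p n //
      LinearIndependent (ZMod p) v ∧ ∀ i j, symp (v i) (v j) = 0} =
    ∏ i ∈ Finset.range m, (p ^ (2 * n - i) - p ^ i) := by
  induction m with
  | zero =>
    rw [Finset.range_zero, Finset.prod_empty]
    rw [Nat.card_eq_one_iff_unique.mpr]
    constructor
    · constructor
      intro a b
      apply Subtype.ext
      funext i
      exact absurd i.2 (by omega)
    · exact ⟨⟨fun i => absurd i.2 (by omega), by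
        constructor
        · exact linearIndependent_empty_type
        · intro i; exact absurd i.2 (by omega)⟩⟩
  | succ m ih =>
    classical
    have hm' : m ≤ n := by omega
    set T := {v : Fin m → PV p n //
      LinearIndependent (ZMod p) v ∧ ∀ i j, symp (v i) (v j) = 0} with hT
    set S := {v : Fin (m + 1) → PV p n //
      LinearIndependent (ZMod p) v ∧ ∀ i j, symp (v i) (v j) = 0} with hS
    have hsnoc : ∀ (w : Fin m → PV p n) (x : PV p n),
        (LinearIndependent (ZMod p) (Fin.snoc w x : Fin (m+1) → PV p n) ∧
          ∀ i j, symp ((Fin.snoc w x : Fin (m+1) → PV p n) i) ((Fin.snoc w x : Fin (m+1) → PV p n) j) = 0) ↔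
        ((LinearIndependent (ZMod p) w ∧ ∀ i j, symp (w i) (w j) = 0) ∧
          (x ∈ (sympB p n).orthogonal (Submodule.span (ZMod p) (Set.range w)) ∧
            x ∉ Submodule.span (ZMod p) (Set.range w))) := by
      intro w x
      rw [linearIndependent_fin_snoc, ortho_snoc_iff]
      tauto
    have hcond : ∀ v : S, (LinearIndependent (ZMod p) (Fin.init v.1) ∧
        ∀ i j, symp (Fin.init v.1 i) (Fin.init v.1 j) = 0) := by
      intro v
      have := v.2
      rw [← Fin.snoc_init_self v.1] at this
      exact ((hsnoc _ _).mp this).1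
    let f : S → T := fun v => ⟨Fin.init v.1, hcond v⟩
    have efib : ∀ w : T, {v : S // f v = w} ≃
        {x : PV p n //
          x ∈ (sympB p n).orthogonal (Submodule.span (ZMod p) (Set.range w.1)) ∧
          x ∉ Submodule.span (ZMod p) (Set.range w.1)} := by
      intro w
      refine ⟨fun v => ⟨v.1.1 (Fin.last m), ?_⟩,
        fun x => ⟨⟨Fin.snoc w.1 x.1, (hsnoc w.1 x.1).mpr ⟨w.2, x.2⟩⟩, ?_⟩, ?_, ?_⟩
      · have := v.1.2
        rw [← Fin.snoc_init_self v.1.1] at this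
        have h2 := ((hsnoc _ _).mp this).2
        have hw : Fin.init v.1.1 = w.1 := congrArg Subtype.val v.2
        rwa [hw] at h2
      · apply Subtype.ext
        show Fin.init (Fin.snoc w.1 x.1 : Fin (m+1) → PV p n) = w.1
        simp
      · intro v
        apply Subtype.ext
        apply Subtype.ext
        have hw : Fin.init v.1.1 = w.1 := congrArg Subtype.val v.2
        simp only
        rw [← hw, Fin.snoc_init_self]
      · intro x
        apply Subtype.ext
        simp only
        rw [Fin.snoc_last]
    have e : S ≃ Σ w : T, {v : S // f v = w} := (Equiv.sigmaFiberEquiv f).symm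
    haveI : Fintype T := Fintype.ofFinite _
    haveI : Fintype S := Fintype.ofFinite _
    haveI : ∀ w : T, Fintype {v : S // f v = w} := fun w => Fintype.ofFinite _
    rw [Nat.card_congr e, Nat.card_eq_fintype_card, Fintype.card_sigma]
    have hc : ∀ w : T, Fintype.card {v : S // f v = w} = p ^ (2 * n - m) - p ^ m := by
      intro w
      rw [← Nat.card_eq_fintype_card, Nat.card_congr (efib w)]
      exact card_fiber w.1 w.2.1 w.2.2
    rw [Finset.sum_congr rfl (fun w _ => hc w), Finset.sum_const, smul_eq_mul,
      Finset.card_univ, ← Nat.card_eq_fintype_card, ih hm',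
      Finset.prod_range_succ]
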